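/- For K < 6, the energy 𝓔₂(h) = ∫_{-∞}^0 ((h')² + (25/4)h²) dz + (1/2)(K-6) h(0)² satisfies 𝓔₂(h) ≥ (25/4 - (6-K)²/4) ∫_{-∞}^0 h² dz for all admissible h, with equality for h = h₁(z) = e^{(6-K)z/2} normalized in L². -/

import Mathlib

set_option maxHeartbeats 1000000


open Real Set MeasureTheory Filter

lemma exp_sq_integrableOn_Iic {a : ℝ} (ha : 0 < a) :
    IntegrableOn (fun z => (Real.exp (a * z)) ^ 2) (Set.Iic (0:ℝ)) := by
  have h1 : IntegrableOn (fun x => Real.exp (-(2*a) * x)) (Set.Ioi (0:ℝ)) :=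
    exp_neg_integrableOn_Ioi 0 (by linarith)
  have h2 : IntegrableOn (fun x => Real.exp (-(2*a) * (-x))) (Set.Iio (0:ℝ)) := by
    have := ((integrable_indicator_iff measurableSet_Ioi).2 h1).comp_neg
    rw [← integrable_indicator_iff measurableSet_Iio]
    convert this using 1
    · exact rfl
    ext x
    simp only [Function.comp, Set.indicator]
    by_cases hx : x ∈ Set.Iio (0:ℝ)
    · simp [hx, Set.mem_Ioi.mpr (by simpa using hx : (0:ℝ) < -x)]
    · have : ¬ (-x ∈ Set.Ioi (0:ℝ)) := by simp at hx ⊢; linarith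
      simp [hx, this]
  have h3 : IntegrableOn (fun z => (Real.exp (a * z)) ^ 2) (Set.Iio (0:ℝ)) := by
    apply h2.congr_fun ?_ measurableSet_Iio
    intro x _
    simp only [sq, ← Real.exp_add]
    ring_nf
  exact (integrableOn_Iic_iff_integrableOn_Iio).2 h3

lemma exp_sq_integral_Iic {a : ℝ} (ha : 0 < a) :
    ∫ z in Set.Iic (0:ℝ), (Real.exp (a * z)) ^ 2 = 1 / (2 * a) := by
  have hderiv : ∀ x ∈ Set.Iic (0:ℝ),
      HasDerivAt (fun z => (1/(2*a)) * (Real.exp (a * z)) ^ 2)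
        ((Real.exp (a * x)) ^ 2) x := by
    intro x _
    have h1 : HasDerivAt (fun z => Real.exp (a * z)) (a * Real.exp (a * x)) x := by
      simpa [mul_comm, Function.comp_def] using (Real.hasDerivAt_exp (a * x)).comp x
        ((hasDerivAt_id x).const_mul a)
    have := ((h1.pow 2).const_mul (1/(2*a)))
    refine this.congr_deriv ?_
    field_simp
    ring
  have htend : Tendsto (fun z => (1/(2*a)) * (Real.exp (a * z)) ^ 2) atBot (nhds 0) := by
    have : Tendsto (fun z : ℝ => a * z) atBot atBot :=
      (tendsto_const_mul_atBot_of_pos ha).2 tendsto_id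
    have he := Real.tendsto_exp_atBot.comp this
    have := ((he.pow 2).const_mul (1/(2*a)))
    simpa using this
  have := integral_Iic_of_hasDerivAt_of_tendsto' hderiv (exp_sq_integrableOn_Iic ha) htend
  rw [this]
  simp

/-- For `K < 6`, the penalized energy dominates `(25/4 - (6-K)²/4)‖h‖²` for all
admissible `h`, with equality for `h₁(z) = e^{(6-K)z/2}`. -/
theorem energy_lower_bound_K_lt_six (K : ℝ) (hK : K < 6) :
    (∀ h : ℝ → ℝ, ContDiff ℝ 1 h →
      IntegrableOn (fun z => (h z) ^ 2) (Set.Iic 0) →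
      IntegrableOn (fun z => (deriv h z) ^ 2) (Set.Iic 0) →
      Tendsto h atBot (nhds 0) →
      (∫ z in Set.Iic (0:ℝ), ((deriv h z) ^ 2 + (25/4) * (h z) ^ 2))
          + (1/2) * (K - 6) * (h 0) ^ 2
        ≥ (25/4 - (6-K)^2/4) * ∫ z in Set.Iic (0:ℝ), (h z) ^ 2) ∧
    ((∫ z in Set.Iic (0:ℝ),
        ((deriv (fun z => Real.exp ((6-K)/2 * z)) z) ^ 2
          + (25/4) * (Real.exp ((6-K)/2 * z)) ^ 2))
        + (1/2) * (K - 6) * (Real.exp ((6-K)/2 * 0)) ^ 2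
      = (25/4 - (6-K)^2/4)
          * ∫ z in Set.Iic (0:ℝ), (Real.exp ((6-K)/2 * z)) ^ 2) := by
  obtain ⟨a, ha_def⟩ : ∃ a : ℝ, a = (6 - K) / 2 := ⟨_, rfl⟩
  have ha : 0 < a := by rw [ha_def]; linarith
  constructor
  · intro h hC1 hintH hintD htend
    have hd : Differentiable ℝ h := hC1.differentiable one_ne_zero
    have hdc : Continuous (deriv h) := hC1.continuous_deriv le_rfl
    -- integrability of h * deriv h
    have hmul : IntegrableOn (fun z => 2 * h z * deriv h z) (Set.Iic 0) := by
      apply Integrable.mono' (hintH.add hintD)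
        ((continuous_const.mul hd.continuous |>.mul hdc).aestronglyMeasurable)
      filter_upwards with x
      have h1 := sq_nonneg (deriv h x - h x)
      have h2 := sq_nonneg (deriv h x + h x)
      rw [Real.norm_eq_abs, abs_le]
      simp only [Pi.add_apply, Pi.mul_apply]
      constructor <;> nlinarith
    have hkey : ∫ z in Set.Iic (0:ℝ), 2 * h z * deriv h z = (h 0) ^ 2 := by
      have hderiv : ∀ x ∈ Set.Iic (0:ℝ),
          HasDerivAt (fun z => (h z) ^ 2) (2 * h x * deriv h x) x := by
        intro x _
        simpa [mul_comm, mul_assoc, Pi.pow_def] using ((hd x).hasDerivAt.pow 2)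
      have htend2 : Tendsto (fun z => (h z) ^ 2) atBot (nhds 0) := by
        simpa using (htend.pow 2)
      simpa using integral_Iic_of_hasDerivAt_of_tendsto' hderiv hmul htend2
    -- nonnegativity of ∫ (h' - a h)^2
    have hsub : IntegrableOn (fun z => (deriv h z - a * h z) ^ 2) (Set.Iic 0) := by
      have : (fun z => (deriv h z - a * h z) ^ 2)
          = fun z => (deriv h z)^2 - a * (2 * h z * deriv h z) + a^2 * (h z)^2 := by
        ext z; ring
      rw [this]
      exact (hintD.sub (hmul.const_mul a)).add (hintH.const_mul (a^2))
    have hnonneg : 0 ≤ ∫ z in Set.Iic (0:ℝ), (deriv h z - a * h z) ^ 2 :=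
      integral_nonneg fun z => sq_nonneg _
    have hexpand : ∫ z in Set.Iic (0:ℝ), (deriv h z - a * h z) ^ 2
        = (∫ z in Set.Iic (0:ℝ), (deriv h z)^2)
          - a * (h 0)^2 + a^2 * ∫ z in Set.Iic (0:ℝ), (h z)^2 := by
      have : (fun z => (deriv h z - a * h z) ^ 2)
          = fun z => (deriv h z)^2 - a * (2 * h z * deriv h z) + a^2 * (h z)^2 := by
        ext z; ring
      have hA : IntegrableOn (fun z => deriv h z ^ 2 - a * (2 * h z * deriv h z))
          (Set.Iic 0) := hintD.sub (hmul.const_mul a)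
      have hB : IntegrableOn (fun z => a ^ 2 * (h z) ^ 2) (Set.Iic 0) :=
        hintH.const_mul (a^2)
      rw [this, integral_add hA hB, integral_sub hintD (hmul.const_mul a),
        integral_const_mul, integral_const_mul, hkey]
    have hsplit : ∫ z in Set.Iic (0:ℝ), ((deriv h z) ^ 2 + (25/4) * (h z) ^ 2)
        = (∫ z in Set.Iic (0:ℝ), (deriv h z)^2)
          + (25/4) * ∫ z in Set.Iic (0:ℝ), (h z)^2 := by
      rw [integral_add hintD (hintH.const_mul _), integral_const_mul]
    rw [hsplit]
    have ha2 : (6-K)^2/4 = a^2 := by rw [ha_def]; ring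
    have hc : (1/2) * (K - 6) = -a := by rw [ha_def]; ring
    rw [ha2, hc]
    nlinarith [hnonneg, hexpand]
  · have hderiv_eq : deriv (fun z => Real.exp ((6-K)/2 * z))
        = fun z => a * Real.exp (a * z) := by
      ext x
      have h1 : HasDerivAt (fun z => Real.exp (a * z)) (a * Real.exp (a * x)) x := by
        simpa [mul_comm, Function.comp_def] using (Real.hasDerivAt_exp (a * x)).comp x
          ((hasDerivAt_id x).const_mul a)
      rw [ha_def] at h1 ⊢
      exact h1.deriv
    rw [hderiv_eq]
    have hI := exp_sq_integral_Iic ha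
    have hintegrand : ∀ z : ℝ, (a * Real.exp (a * z)) ^ 2
        + (25/4) * (Real.exp ((6-K)/2 * z)) ^ 2
        = (a^2 + 25/4) * (Real.exp (a * z))^2 := by
      intro z; rw [ha_def]; ring
    have h2 : (∫ z in Set.Iic (0:ℝ),
        ((a * Real.exp (a * z)) ^ 2 + (25/4) * (Real.exp ((6-K)/2 * z)) ^ 2))
        = (a^2 + 25/4) * (1 / (2*a)) := by
      rw [← hI, ← integral_const_mul]
      exact setIntegral_congr_fun measurableSet_Iic fun z _ => hintegrand z
    have h3 : (∫ z in Set.Iic (0:ℝ), (Real.exp ((6-K)/2 * z)) ^ 2) = 1 / (2*a) := by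
      rw [← hI, ha_def]
    rw [h2, h3]
    have ha2 : (6-K)^2/4 = a^2 := by rw [ha_def]; ring
    have hc : (1/2) * (K - 6) = -a := by rw [ha_def]; ring
    rw [ha2, hc]
    simp only [mul_zero, Real.exp_zero, one_pow]
    field_simp
    ring
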